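/- For the planar-shear eigenvalue problem with K = 0: (α/b+1)Γ₁₁ = Γ, (α/b+1)Γ₁₂ = 0, (α/b+1+1/(2b))Γ₁₃ = 0, (α/b+1)Γ₂₂ = Γ, (α/b+1+1/(2b))Γ₂₃ = 0, (α/b+1+1/b)Γ₃₃ = Γ with Γ = (Γ₁₁+Γ₂₂+Γ₃₃)/3: setting λ = α/b+1 and B = 1/(2b), the nonzero solutions with Γ ≠ 0 correspond exactly to λ solving λ(λ + 2B) = (2λ + λ + 2B)/3, i.e. λ₁,₂ = ½[−(B−1) ± √((B−1)² + 8B/3)], and the remaining eigenvalues are λ = 0 and λ = −B, each with a two-dimensional eigenspace. -/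

import Mathlib

/-- The planar-shear (K = 0) moment eigenvalue system, written in terms of
`λ = α/b + 1` and `B = 1/(2b)`, for a symmetric matrix `Γ`:
`λΓ₁₁ = Γ̄`, `λΓ₁₂ = 0`, `(λ+B)Γ₁₃ = 0`, `λΓ₂₂ = Γ̄`, `(λ+B)Γ₂₃ = 0`,
`(λ+2B)Γ₃₃ = Γ̄` with `Γ̄ = (Γ₁₁+Γ₂₂+Γ₃₃)/3`. -/
def PlanarSystem (b lam : ℝ) (Γ : Matrix (Fin 3) (Fin 3) ℝ) : Prop :=
  letI B : ℝ := 1 / (2 * b)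
  letI Γbar : ℝ := (Γ 0 0 + Γ 1 1 + Γ 2 2) / 3
  lam * Γ 0 0 = Γbar ∧
  lam * Γ 0 1 = 0 ∧
  (lam + B) * Γ 0 2 = 0 ∧
  lam * Γ 1 1 = Γbar ∧
  (lam + B) * Γ 1 2 = 0 ∧
  (lam + 2 * B) * Γ 2 2 = Γbar

/-- for the planar-shear system with `K = 0`, the eigenvalues
with `Γ ≠ 0` are exactly `0`, `−B` and the two roots
`λ± = ½[−(1/b − 1) ± √((1/b − 1)² + 8/(3b))]` of
`λ(λ + 2B) = (2(λ + 2B) + λ)/3`; moreover the eigenvalues `0` and `−B` each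
have a two-dimensional eigenspace, described explicitly. -/
theorem stmt15 (b : ℝ) (hb : 0 < b) (lamP lamM : ℝ)
    (hP : lamP = (-(1 / b - 1) + Real.sqrt ((1 / b - 1) ^ 2 + 8 / (3 * b))) / 2)
    (hM : lamM = (-(1 / b - 1) - Real.sqrt ((1 / b - 1) ^ 2 + 8 / (3 * b))) / 2) :
    (∀ lam : ℝ, lam * (lam + 1 / b) = (2 * (lam + 1 / b) + lam) / 3 ↔
        lam = lamP ∨ lam = lamM) ∧
    ({lam : ℝ | ∃ Γ : Matrix (Fin 3) (Fin 3) ℝ, Γ ≠ 0 ∧ Γ.IsSymm ∧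
        PlanarSystem b lam Γ} = {0, -(1 / (2 * b)), lamP, lamM}) ∧
    ({Γ : Matrix (Fin 3) (Fin 3) ℝ | Γ.IsSymm ∧ PlanarSystem b 0 Γ} =
      {Γ | ∃ μ1 μ2 : ℝ, Γ = !![μ1, μ2, 0; μ2, -μ1, 0; 0, 0, 0]}) ∧
    ({Γ : Matrix (Fin 3) (Fin 3) ℝ | Γ.IsSymm ∧
        PlanarSystem b (-(1 / (2 * b))) Γ} =
      {Γ | ∃ μ1 μ2 : ℝ, Γ = !![0, 0, μ1; 0, 0, μ2; μ1, μ2, 0]}) := by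
  have hbne : b ≠ 0 := ne_of_gt hb
  have hBpos : (0:ℝ) < 1 / (2 * b) := by positivity
  have hBne : (1:ℝ) / (2 * b) ≠ 0 := ne_of_gt hBpos
  have h1b : (0:ℝ) < 1 / b := by positivity
  have h2B : 2 * (1 / (2 * b)) = 1 / b := by field_simp
  have hD : (0:ℝ) ≤ (1 / b - 1) ^ 2 + 8 / (3 * b) := by positivity
  have hs : Real.sqrt ((1 / b - 1) ^ 2 + 8 / (3 * b)) ^ 2
      = (1 / b - 1) ^ 2 + 8 / (3 * b) := Real.sq_sqrt hD
  have key : ∀ lam : ℝ, lam * (lam + 1 / b) - (2 * (lam + 1 / b) + lam) / 3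
      = (lam - lamP) * (lam - lamM) := by
    intro lam
    rw [hP, hM]
    linear_combination hs / 4
  -- Part 1
  have part1 : ∀ lam : ℝ, lam * (lam + 1 / b) = (2 * (lam + 1 / b) + lam) / 3 ↔
      lam = lamP ∨ lam = lamM := by
    intro lam
    constructor
    · intro h
      have h0 : (lam - lamP) * (lam - lamM) = 0 := by rw [← key lam]; linarith
      rcases mul_eq_zero.1 h0 with h' | h'
      · left; linarith
      · right; linarith
    · rintro (rfl | rfl)
      · have h0 := key lam; rw [sub_self, zero_mul] at h0; linarith
      · have h0 := key lam; rw [sub_self, mul_zero] at h0; linarith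
  -- properties of roots
  have hroot : ∀ lam : ℝ, lam = lamP ∨ lam = lamM →
      lam ≠ 0 ∧ lam + 1 / b ≠ 0 := by
    intro lam h
    have hq := (part1 lam).2 h
    constructor
    · intro h0
      rw [h0] at hq
      linarith
    · intro h0
      have hfalse : (1:ℝ)/b = 0 := by linear_combination 3*hq - 3*lam*h0 + 3*h0
      linarith
  -- membership of roots
  have hmemroot : ∀ lam : ℝ, lam = lamP ∨ lam = lamM →
      ∃ Γ : Matrix (Fin 3) (Fin 3) ℝ, Γ ≠ 0 ∧ Γ.IsSymm ∧ PlanarSystem b lam Γ := by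
    intro lam h
    obtain ⟨hl0, hlb⟩ := hroot lam h
    have hq := (part1 lam).2 h
    refine ⟨!![lam + 1/b, 0, 0; 0, lam + 1/b, 0; 0, 0, lam], ?_, ?_, ?_⟩
    · intro hΓ
      apply hlb
      have := congrFun (congrFun hΓ 0) 0
      simpa using this
    · rw [Matrix.IsSymm]; ext i j; fin_cases i <;> fin_cases j <;> simp [Matrix.vecHead, Matrix.vecTail]
    · refine ⟨?_, ?_, ?_, ?_, ?_, ?_⟩ <;>
        simp [Matrix.vecHead, Matrix.vecTail] <;> linear_combination hq
  refine ⟨part1, ?_, ?_, ?_⟩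
  · -- Part 2
    ext lam
    simp only [Set.mem_setOf_eq, Set.mem_insert_iff, Set.mem_singleton_iff]
    constructor
    · rintro ⟨Γ, hne, hsym, h⟩
      obtain ⟨e1, e2, e3, e4, e5, e6⟩ := h
      by_cases h0 : lam = 0
      · exact Or.inl h0
      by_cases hBc : lam = -(1 / (2 * b))
      · exact Or.inr (Or.inl hBc)
      -- off-diagonal entries vanish
      have h01 : Γ 0 1 = 0 := by
        rcases mul_eq_zero.1 e2 with h' | h'
        · exact absurd h' h0
        · exact h'
      have hlB : lam + 1 / (2 * b) ≠ 0 := by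
        intro h'; apply hBc; linarith
      have h02 : Γ 0 2 = 0 := by
        rcases mul_eq_zero.1 e3 with h' | h'
        · exact absurd h' hlB
        · exact h'
      have h12 : Γ 1 2 = 0 := by
        rcases mul_eq_zero.1 e5 with h' | h'
        · exact absurd h' hlB
        · exact h'
      by_cases h2 : lam + 2 * (1 / (2 * b)) = 0
      · -- λ = -1/b : only the zero solution, contradiction
        exfalso
        have hg : (Γ 0 0 + Γ 1 1 + Γ 2 2) / 3 = 0 := by
          rw [← e6, h2, zero_mul]
        have h00 : Γ 0 0 = 0 := by
          have := e1; rw [hg] at this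
          rcases mul_eq_zero.1 this with h' | h'
          · exact absurd h' h0
          · exact h'
        have h11 : Γ 1 1 = 0 := by
          have := e4; rw [hg] at this
          rcases mul_eq_zero.1 this with h' | h'
          · exact absurd h' h0
          · exact h'
        have h22 : Γ 2 2 = 0 := by
          have := hg; rw [h00, h11] at this; linarith
        apply hne
        ext i j
        fin_cases i <;> fin_cases j <;>
          simp only [Matrix.zero_apply] <;>
          first
            | exact h00 | exact h01 | exact h02 | exact h11 | exact h12 | exact h22
            | exact (hsym.apply 0 1).trans h01
            | exact (hsym.apply 0 2).trans h02
            | exact (hsym.apply 1 2).trans h12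
      · -- generic case: the quadratic must hold
        by_cases hg : (Γ 0 0 + Γ 1 1 + Γ 2 2) / 3 = 0
        · exfalso
          have h00 : Γ 0 0 = 0 := by
            have := e1; rw [hg] at this
            rcases mul_eq_zero.1 this with h' | h'
            · exact absurd h' h0
            · exact h'
          have h11 : Γ 1 1 = 0 := by
            have := e4; rw [hg] at this
            rcases mul_eq_zero.1 this with h' | h'
            · exact absurd h' h0
            · exact h'
          have h22 : Γ 2 2 = 0 := by
            have := e6; rw [hg] at this
            rcases mul_eq_zero.1 this with h' | h'
            · exact absurd h' h2
            · exact h'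
          apply hne
          ext i j
          fin_cases i <;> fin_cases j <;>
            simp only [Matrix.zero_apply] <;>
            first
              | exact h00 | exact h01 | exact h02 | exact h11 | exact h12 | exact h22
              | exact (hsym.apply 0 1).trans h01
              | exact (hsym.apply 0 2).trans h02
              | exact (hsym.apply 1 2).trans h12
        · have heq : (3 * lam * (lam + 2 * (1 / (2 * b)))) * ((Γ 0 0 + Γ 1 1 + Γ 2 2) / 3)
              = (2 * (lam + 2 * (1 / (2 * b))) + lam) * ((Γ 0 0 + Γ 1 1 + Γ 2 2) / 3) := by
            linear_combination (lam + 2 * (1 / (2 * b))) * e1 +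
              (lam + 2 * (1 / (2 * b))) * e4 + lam * e6
          have h3 := mul_right_cancel₀ hg heq
          rw [h2B] at h3
          exact Or.inr (Or.inr ((part1 lam).1 (by linear_combination h3 / 3)))
    · rintro (rfl | rfl | h | h)
      · refine ⟨!![1, 0, 0; 0, -1, 0; 0, 0, 0], ?_, ?_, ?_⟩
        · intro hΓ
          have := congrFun (congrFun hΓ 0) 0
          simp at this
        · rw [Matrix.IsSymm]; ext i j; fin_cases i <;> fin_cases j <;> simp [Matrix.vecHead, Matrix.vecTail]
        · refine ⟨?_, ?_, ?_, ?_, ?_, ?_⟩ <;> (simp [Matrix.vecHead, Matrix.vecTail, Fin.isValue]; try ring)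
      · refine ⟨!![0, 0, 1; 0, 0, 0; 1, 0, 0], ?_, ?_, ?_⟩
        · intro hΓ
          have := congrFun (congrFun hΓ 0) 2
          simp at this
        · rw [Matrix.IsSymm]; ext i j; fin_cases i <;> fin_cases j <;> simp [Matrix.vecHead, Matrix.vecTail]
        · refine ⟨?_, ?_, ?_, ?_, ?_, ?_⟩ <;> (simp [Matrix.vecHead, Matrix.vecTail, Fin.isValue]; try ring)
      · exact hmemroot lam (Or.inl h)
      · exact hmemroot lam (Or.inr h)
  · -- Part 3 : eigenspace of 0
    ext Γ
    simp only [Set.mem_setOf_eq]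
    constructor
    · rintro ⟨hsym, e1, e2, e3, e4, e5, e6⟩
      have hg : (Γ 0 0 + Γ 1 1 + Γ 2 2) / 3 = 0 := by rw [← e1, zero_mul]
      have h02 : Γ 0 2 = 0 := by
        rcases mul_eq_zero.1 e3 with h' | h'
        · exact absurd h' (by positivity)
        · exact h'
      have h12 : Γ 1 2 = 0 := by
        rcases mul_eq_zero.1 e5 with h' | h'
        · exact absurd h' (by positivity)
        · exact h'
      have h22 : Γ 2 2 = 0 := by
        have := e6; rw [hg] at this
        rcases mul_eq_zero.1 this with h' | h'
        · exact absurd h' (by positivity)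
        · exact h'
      have h11 : Γ 1 1 = -Γ 0 0 := by
        rw [h22] at hg; linarith
      refine ⟨Γ 0 0, Γ 0 1, ?_⟩
      ext i j
      fin_cases i <;> fin_cases j <;> simp [Matrix.vecHead, Matrix.vecTail] <;>
        first
          | rfl | exact h02 | exact h11 | exact h12 | exact h22
          | exact hsym.apply 0 1
          | exact (hsym.apply 0 2).trans h02
          | exact (hsym.apply 1 2).trans h12
    · rintro ⟨μ1, μ2, rfl⟩
      refine ⟨?_, ?_, ?_, ?_, ?_, ?_, ?_⟩
      · rw [Matrix.IsSymm]; ext i j; fin_cases i <;> fin_cases j <;> simp [Matrix.vecHead, Matrix.vecTail]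
      all_goals (simp [Matrix.vecHead, Matrix.vecTail, Fin.isValue]; try ring)
  · -- Part 4 : eigenspace of -B
    ext Γ
    simp only [Set.mem_setOf_eq]
    constructor
    · rintro ⟨hsym, e1, e2, e3, e4, e5, e6⟩
      have h01 : Γ 0 1 = 0 := by
        rcases mul_eq_zero.1 e2 with h' | h'
        · exact absurd h' (neg_ne_zero.2 hBne)
        · exact h'
      have h11 : Γ 0 0 = Γ 1 1 :=
        mul_left_cancel₀ (a := -(1 / (2 * b))) (neg_ne_zero.2 hBne) (e1.trans e4.symm)
      have e6' : (1 / (2 * b)) * Γ 2 2 = (Γ 0 0 + Γ 1 1 + Γ 2 2) / 3 := by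
        linear_combination e6
      have h22 : Γ 2 2 = -Γ 0 0 := by
        have h' : (1 / (2 * b)) * Γ 2 2 = (1 / (2 * b)) * (-Γ 0 0) := by
          linear_combination e6' - e1
        exact mul_left_cancel₀ hBne h'
      have key00 : (1 / (2 * b) + 1 / 3) * Γ 0 0 = 0 := by
        linear_combination -e1 + (1/3) * h11 - (1/3) * h22
      have h00 : Γ 0 0 = 0 := by
        rcases mul_eq_zero.1 key00 with h' | h'
        · exact absurd h' (by positivity)
        · exact h'
      have h11' : Γ 1 1 = 0 := by rw [← h11]; exact h00
      have h22' : Γ 2 2 = 0 := by rw [h22, h00, neg_zero]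
      refine ⟨Γ 0 2, Γ 1 2, ?_⟩
      ext i j
      fin_cases i <;> fin_cases j <;> simp [Matrix.vecHead, Matrix.vecTail] <;>
        first
          | rfl | exact h00 | exact h01 | exact h11' | exact h22'
          | exact (hsym.apply 0 1).trans h01
          | exact hsym.apply 0 2
          | exact hsym.apply 1 2
    · rintro ⟨μ1, μ2, rfl⟩
      refine ⟨?_, ?_, ?_, ?_, ?_, ?_, ?_⟩
      · rw [Matrix.IsSymm]; ext i j; fin_cases i <;> fin_cases j <;> simp [Matrix.vecHead, Matrix.vecTail]
      all_goals (simp [Matrix.vecHead, Matrix.vecTail, Fin.isValue]; try ring)
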